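/- Let s ≥ 2 and let a, b be positive integers with s = lcm(a, b). Then the subgroup H = ⟨u^a, v^b⟩ of G is core-free and has index 12ab in G. -/

import Mathlib

private theorem prod_step {G : Type*} [Monoid G] (a b r r' : List G)
    (h : r.prod = r'.prod) : (a ++ r ++ b).prod = (a ++ r' ++ b).prod := by
  simp [List.prod_append, h]

private theorem coxIdents {G : Type*} [Group G] {ρ0 ρ1 ρ2 u v : G}
    (hr0 : ρ0 ^ 2 = 1) (hr1 : ρ1 ^ 2 = 1) (hr2 : ρ2 ^ 2 = 1)
    (h01 : (ρ0 * ρ1) ^ 3 = 1) (h12 : (ρ1 * ρ2) ^ 6 = 1) (h02 : (ρ0 * ρ2) ^ 2 = 1)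
    (hu : u = ρ0 * (ρ1 * ρ2) ^ 2 * ρ1) (hv : v = (ρ0 * ρ1 * ρ2) ^ 2) :
    u * v = v * u ∧ ρ1 * u * ρ1 = v ∧ ρ1 * v * ρ1 = u ∧ ρ0 * u * ρ0 = u⁻¹ ∧
      ρ0 * v * ρ0 = v * u⁻¹ ∧ ρ2 * u * ρ2 = u ∧ ρ2 * v * ρ2 = v⁻¹ * u := by
  have hr0' : ρ0 * ρ0 = 1 := by rw [← pow_two]; exact hr0
  have hr1' : ρ1 * ρ1 = 1 := by rw [← pow_two]; exact hr1
  have hr2' : ρ2 * ρ2 = 1 := by rw [← pow_two]; exact hr2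
  have i0 : ρ0⁻¹ = ρ0 := by rw [inv_eq_iff_mul_eq_one]; exact hr0'
  have i1 : ρ1⁻¹ = ρ1 := by rw [inv_eq_iff_mul_eq_one]; exact hr1'
  have i2 : ρ2⁻¹ = ρ2 := by rw [inv_eq_iff_mul_eq_one]; exact hr2'
  have r00 : List.prod [ρ0, ρ0] = List.prod ([] : List G) := by simpa using hr0'
  have r11 : List.prod [ρ1, ρ1] = List.prod ([] : List G) := by simpa using hr1'
  have r22 : List.prod [ρ2, ρ2] = List.prod ([] : List G) := by simpa using hr2'
  have br : List.prod [ρ0, ρ1, ρ0] = List.prod [ρ1, ρ0, ρ1] := by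
    have h : (ρ0 * ρ1 * ρ0) * (ρ1 * ρ0 * ρ1) = 1 := by
      have h3 := h01
      rw [pow_succ, pow_two] at h3
      simpa [mul_assoc] using h3
    have h2 := eq_inv_of_mul_eq_one_left h
    simpa [mul_inv_rev, i0, i1, mul_assoc] using h2
  have c02 : List.prod [ρ0, ρ2] = List.prod [ρ2, ρ0] := by
    have h : (ρ0 * ρ2) * (ρ0 * ρ2) = 1 := by rw [← pow_two]; exact h02
    have h2 := eq_inv_of_mul_eq_one_left h
    simpa [mul_inv_rev, i0, i2, mul_assoc] using h2
  have s6 : List.prod [ρ1, ρ2, ρ1, ρ2, ρ1, ρ2] = List.prod [ρ2, ρ1, ρ2, ρ1, ρ2, ρ1] := by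
    have h : ((ρ1 * ρ2) ^ 3) * ((ρ1 * ρ2) ^ 3) = 1 := by
      rw [← pow_two, ← pow_mul]; exact h12
    have h2 := eq_inv_of_mul_eq_one_left h
    simpa [pow_succ, mul_inv_rev, i1, i2, mul_assoc] using h2
  have hu' : u = List.prod [ρ0, ρ1, ρ2, ρ1, ρ2, ρ1] := by
    simp [hu, pow_succ, mul_assoc]
  have hv' : v = List.prod [ρ0, ρ1, ρ2, ρ0, ρ1, ρ2] := by
    simp [hv, pow_succ, mul_assoc]
  have Ehuv : List.prod [ρ0, ρ1, ρ2, ρ1, ρ2, ρ1, ρ0, ρ1, ρ2, ρ0, ρ1, ρ2] = List.prod [ρ0, ρ1, ρ2, ρ0, ρ1, ρ2, ρ0, ρ1, ρ2, ρ1, ρ2, ρ1] := by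
    have t0 : List.prod [ρ0, ρ1, ρ2, ρ1, ρ2, ρ1, ρ0, ρ1, ρ2, ρ0, ρ1, ρ2] = List.prod [ρ0, ρ1, ρ2, ρ0, ρ0, ρ1, ρ2, ρ1, ρ0, ρ1, ρ2, ρ0, ρ1, ρ2] := prod_step [ρ0, ρ1, ρ2] [ρ1, ρ2, ρ1, ρ0, ρ1, ρ2, ρ0, ρ1, ρ2] ([] : List G) [ρ0, ρ0] r00.symm
    have t1 : List.prod [ρ0, ρ1, ρ2, ρ0, ρ0, ρ1, ρ2, ρ1, ρ0, ρ1, ρ2, ρ0, ρ1, ρ2] = List.prod [ρ0, ρ1, ρ2, ρ0, ρ0, ρ1, ρ2, ρ0, ρ1, ρ0, ρ2, ρ0, ρ1, ρ2] := prod_step [ρ0, ρ1, ρ2, ρ0, ρ0, ρ1, ρ2] [ρ2, ρ0, ρ1, ρ2] [ρ1, ρ0, ρ1] [ρ0, ρ1, ρ0] br.symm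
    have t2 : List.prod [ρ0, ρ1, ρ2, ρ0, ρ0, ρ1, ρ2, ρ0, ρ1, ρ0, ρ2, ρ0, ρ1, ρ2] = List.prod [ρ0, ρ1, ρ2, ρ0, ρ0, ρ1, ρ2, ρ0, ρ1, ρ2, ρ0, ρ0, ρ1, ρ2] := prod_step [ρ0, ρ1, ρ2, ρ0, ρ0, ρ1, ρ2, ρ0, ρ1] [ρ0, ρ1, ρ2] [ρ0, ρ2] [ρ2, ρ0] c02
    have t3 : List.prod [ρ0, ρ1, ρ2, ρ0, ρ0, ρ1, ρ2, ρ0, ρ1, ρ2, ρ0, ρ0, ρ1, ρ2] = List.prod [ρ0, ρ1, ρ2, ρ0, ρ0, ρ1, ρ2, ρ0, ρ1, ρ2, ρ1, ρ2] := prod_step [ρ0, ρ1, ρ2, ρ0, ρ0, ρ1, ρ2, ρ0, ρ1, ρ2] [ρ1, ρ2] [ρ0, ρ0] ([] : List G) r00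
    have t4 : List.prod [ρ0, ρ1, ρ2, ρ0, ρ0, ρ1, ρ2, ρ0, ρ1, ρ2, ρ1, ρ2] = List.prod [ρ0, ρ1, ρ2, ρ0, ρ0, ρ1, ρ0, ρ2, ρ1, ρ2, ρ1, ρ2] := prod_step [ρ0, ρ1, ρ2, ρ0, ρ0, ρ1] [ρ1, ρ2, ρ1, ρ2] [ρ2, ρ0] [ρ0, ρ2] c02.symm
    have t5 : List.prod [ρ0, ρ1, ρ2, ρ0, ρ0, ρ1, ρ0, ρ2, ρ1, ρ2, ρ1, ρ2] = List.prod [ρ0, ρ1, ρ2, ρ0, ρ1, ρ0, ρ1, ρ2, ρ1, ρ2, ρ1, ρ2] := prod_step [ρ0, ρ1, ρ2, ρ0] [ρ2, ρ1, ρ2, ρ1, ρ2] [ρ0, ρ1, ρ0] [ρ1, ρ0, ρ1] br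
    have t6 : List.prod [ρ0, ρ1, ρ2, ρ0, ρ1, ρ0, ρ1, ρ2, ρ1, ρ2, ρ1, ρ2] = List.prod [ρ0, ρ1, ρ2, ρ0, ρ1, ρ0, ρ2, ρ1, ρ2, ρ1, ρ2, ρ1] := prod_step [ρ0, ρ1, ρ2, ρ0, ρ1, ρ0] ([] : List G) [ρ1, ρ2, ρ1, ρ2, ρ1, ρ2] [ρ2, ρ1, ρ2, ρ1, ρ2, ρ1] s6
    have t7 : List.prod [ρ0, ρ1, ρ2, ρ0, ρ1, ρ0, ρ2, ρ1, ρ2, ρ1, ρ2, ρ1] = List.prod [ρ0, ρ1, ρ2, ρ0, ρ1, ρ2, ρ0, ρ1, ρ2, ρ1, ρ2, ρ1] := prod_step [ρ0, ρ1, ρ2, ρ0, ρ1] [ρ1, ρ2, ρ1, ρ2, ρ1] [ρ0, ρ2] [ρ2, ρ0] c02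
    exact (((((((t0).trans t1).trans t2).trans t3).trans t4).trans t5).trans t6).trans t7
  have Eh1u : List.prod [ρ1, ρ0, ρ1, ρ2, ρ1, ρ2, ρ1, ρ1] = List.prod [ρ0, ρ1, ρ2, ρ0, ρ1, ρ2] := by
    have t0 : List.prod [ρ1, ρ0, ρ1, ρ2, ρ1, ρ2, ρ1, ρ1] = List.prod [ρ0, ρ1, ρ0, ρ2, ρ1, ρ2, ρ1, ρ1] := prod_step ([] : List G) [ρ2, ρ1, ρ2, ρ1, ρ1] [ρ1, ρ0, ρ1] [ρ0, ρ1, ρ0] br.symm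
    have t1 : List.prod [ρ0, ρ1, ρ0, ρ2, ρ1, ρ2, ρ1, ρ1] = List.prod [ρ0, ρ1, ρ2, ρ0, ρ1, ρ2, ρ1, ρ1] := prod_step [ρ0, ρ1] [ρ1, ρ2, ρ1, ρ1] [ρ0, ρ2] [ρ2, ρ0] c02
    have t2 : List.prod [ρ0, ρ1, ρ2, ρ0, ρ1, ρ2, ρ1, ρ1] = List.prod [ρ0, ρ1, ρ2, ρ0, ρ1, ρ2] := prod_step [ρ0, ρ1, ρ2, ρ0, ρ1, ρ2] ([] : List G) [ρ1, ρ1] ([] : List G) r11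
    exact ((t0).trans t1).trans t2
  have Eh1v : List.prod [ρ1, ρ0, ρ1, ρ2, ρ0, ρ1, ρ2, ρ1] = List.prod [ρ0, ρ1, ρ2, ρ1, ρ2, ρ1] := by
    have t0 : List.prod [ρ1, ρ0, ρ1, ρ2, ρ0, ρ1, ρ2, ρ1] = List.prod [ρ1, ρ0, ρ1, ρ0, ρ2, ρ1, ρ2, ρ1] := prod_step [ρ1, ρ0, ρ1] [ρ1, ρ2, ρ1] [ρ2, ρ0] [ρ0, ρ2] c02.symm
    have t1 : List.prod [ρ1, ρ0, ρ1, ρ0, ρ2, ρ1, ρ2, ρ1] = List.prod [ρ0, ρ1, ρ0, ρ0, ρ2, ρ1, ρ2, ρ1] := prod_step ([] : List G) [ρ0, ρ2, ρ1, ρ2, ρ1] [ρ1, ρ0, ρ1] [ρ0, ρ1, ρ0] br.symm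
    have t2 : List.prod [ρ0, ρ1, ρ0, ρ0, ρ2, ρ1, ρ2, ρ1] = List.prod [ρ0, ρ1, ρ2, ρ1, ρ2, ρ1] := prod_step [ρ0, ρ1] [ρ2, ρ1, ρ2, ρ1] [ρ0, ρ0] ([] : List G) r00
    exact ((t0).trans t1).trans t2
  have Eh0u : List.prod [ρ0, ρ0, ρ1, ρ2, ρ1, ρ2, ρ1, ρ0] = List.prod [ρ1, ρ2, ρ1, ρ2, ρ1, ρ0] := by
    have t0 : List.prod [ρ0, ρ0, ρ1, ρ2, ρ1, ρ2, ρ1, ρ0] = List.prod [ρ1, ρ2, ρ1, ρ2, ρ1, ρ0] := prod_step ([] : List G) [ρ1, ρ2, ρ1, ρ2, ρ1, ρ0] [ρ0, ρ0] ([] : List G) r00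
    exact t0
  have Eh0v : List.prod [ρ0, ρ0, ρ1, ρ2, ρ0, ρ1, ρ2, ρ0] = List.prod [ρ0, ρ1, ρ2, ρ0, ρ1, ρ2, ρ1, ρ2, ρ1, ρ2, ρ1, ρ0] := by
    have t0 : List.prod [ρ0, ρ0, ρ1, ρ2, ρ0, ρ1, ρ2, ρ0] = List.prod [ρ0, ρ0, ρ1, ρ0, ρ2, ρ1, ρ2, ρ0] := prod_step [ρ0, ρ0, ρ1] [ρ1, ρ2, ρ0] [ρ2, ρ0] [ρ0, ρ2] c02.symm
    have t1 : List.prod [ρ0, ρ0, ρ1, ρ0, ρ2, ρ1, ρ2, ρ0] = List.prod [ρ0, ρ1, ρ0, ρ1, ρ2, ρ1, ρ2, ρ0] := prod_step [ρ0] [ρ2, ρ1, ρ2, ρ0] [ρ0, ρ1, ρ0] [ρ1, ρ0, ρ1] br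
    have t2 : List.prod [ρ0, ρ1, ρ0, ρ1, ρ2, ρ1, ρ2, ρ0] = List.prod [ρ0, ρ1, ρ0, ρ2, ρ2, ρ1, ρ2, ρ1, ρ2, ρ0] := prod_step [ρ0, ρ1, ρ0] [ρ1, ρ2, ρ1, ρ2, ρ0] ([] : List G) [ρ2, ρ2] r22.symm
    have t3 : List.prod [ρ0, ρ1, ρ0, ρ2, ρ2, ρ1, ρ2, ρ1, ρ2, ρ0] = List.prod [ρ0, ρ1, ρ0, ρ2, ρ2, ρ1, ρ2, ρ1, ρ2, ρ1, ρ1, ρ0] := prod_step [ρ0, ρ1, ρ0, ρ2, ρ2, ρ1, ρ2, ρ1, ρ2] [ρ0] ([] : List G) [ρ1, ρ1] r11.symm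
    have t4 : List.prod [ρ0, ρ1, ρ0, ρ2, ρ2, ρ1, ρ2, ρ1, ρ2, ρ1, ρ1, ρ0] = List.prod [ρ0, ρ1, ρ0, ρ2, ρ1, ρ2, ρ1, ρ2, ρ1, ρ2, ρ1, ρ0] := prod_step [ρ0, ρ1, ρ0, ρ2] [ρ1, ρ0] [ρ2, ρ1, ρ2, ρ1, ρ2, ρ1] [ρ1, ρ2, ρ1, ρ2, ρ1, ρ2] s6.symm
    have t5 : List.prod [ρ0, ρ1, ρ0, ρ2, ρ1, ρ2, ρ1, ρ2, ρ1, ρ2, ρ1, ρ0] = List.prod [ρ0, ρ1, ρ2, ρ0, ρ1, ρ2, ρ1, ρ2, ρ1, ρ2, ρ1, ρ0] := prod_step [ρ0, ρ1] [ρ1, ρ2, ρ1, ρ2, ρ1, ρ2, ρ1, ρ0] [ρ0, ρ2] [ρ2, ρ0] c02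
    exact (((((t0).trans t1).trans t2).trans t3).trans t4).trans t5
  have Eh2u : List.prod [ρ2, ρ0, ρ1, ρ2, ρ1, ρ2, ρ1, ρ2] = List.prod [ρ0, ρ1, ρ2, ρ1, ρ2, ρ1] := by
    have t0 : List.prod [ρ2, ρ0, ρ1, ρ2, ρ1, ρ2, ρ1, ρ2] = List.prod [ρ2, ρ0, ρ2, ρ1, ρ2, ρ1, ρ2, ρ1] := prod_step [ρ2, ρ0] ([] : List G) [ρ1, ρ2, ρ1, ρ2, ρ1, ρ2] [ρ2, ρ1, ρ2, ρ1, ρ2, ρ1] s6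
    have t1 : List.prod [ρ2, ρ0, ρ2, ρ1, ρ2, ρ1, ρ2, ρ1] = List.prod [ρ2, ρ2, ρ0, ρ1, ρ2, ρ1, ρ2, ρ1] := prod_step [ρ2] [ρ1, ρ2, ρ1, ρ2, ρ1] [ρ0, ρ2] [ρ2, ρ0] c02
    have t2 : List.prod [ρ2, ρ2, ρ0, ρ1, ρ2, ρ1, ρ2, ρ1] = List.prod [ρ0, ρ1, ρ2, ρ1, ρ2, ρ1] := prod_step ([] : List G) [ρ0, ρ1, ρ2, ρ1, ρ2, ρ1] [ρ2, ρ2] ([] : List G) r22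
    exact ((t0).trans t1).trans t2
  have Eh2v : List.prod [ρ2, ρ0, ρ1, ρ2, ρ0, ρ1, ρ2, ρ2] = List.prod [ρ2, ρ1, ρ0, ρ2, ρ1, ρ0, ρ0, ρ1, ρ2, ρ1, ρ2, ρ1] := by
    have t0 : List.prod [ρ2, ρ0, ρ1, ρ2, ρ0, ρ1, ρ2, ρ2] = List.prod [ρ2, ρ0, ρ1, ρ2, ρ0, ρ1] := prod_step [ρ2, ρ0, ρ1, ρ2, ρ0, ρ1] ([] : List G) [ρ2, ρ2] ([] : List G) r22
    have t1 : List.prod [ρ2, ρ0, ρ1, ρ2, ρ0, ρ1] = List.prod [ρ2, ρ0, ρ1, ρ0, ρ2, ρ1] := prod_step [ρ2, ρ0, ρ1] [ρ1] [ρ2, ρ0] [ρ0, ρ2] c02.symm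
    have t2 : List.prod [ρ2, ρ0, ρ1, ρ0, ρ2, ρ1] = List.prod [ρ2, ρ1, ρ0, ρ1, ρ2, ρ1] := prod_step [ρ2] [ρ2, ρ1] [ρ0, ρ1, ρ0] [ρ1, ρ0, ρ1] br
    have t3 : List.prod [ρ2, ρ1, ρ0, ρ1, ρ2, ρ1] = List.prod [ρ2, ρ1, ρ0, ρ2, ρ2, ρ1, ρ2, ρ1] := prod_step [ρ2, ρ1, ρ0] [ρ1, ρ2, ρ1] ([] : List G) [ρ2, ρ2] r22.symm
    have t4 : List.prod [ρ2, ρ1, ρ0, ρ2, ρ2, ρ1, ρ2, ρ1] = List.prod [ρ2, ρ1, ρ0, ρ2, ρ1, ρ1, ρ2, ρ1, ρ2, ρ1] := prod_step [ρ2, ρ1, ρ0, ρ2] [ρ2, ρ1, ρ2, ρ1] ([] : List G) [ρ1, ρ1] r11.symm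
    have t5 : List.prod [ρ2, ρ1, ρ0, ρ2, ρ1, ρ1, ρ2, ρ1, ρ2, ρ1] = List.prod [ρ2, ρ1, ρ0, ρ2, ρ1, ρ0, ρ0, ρ1, ρ2, ρ1, ρ2, ρ1] := prod_step [ρ2, ρ1, ρ0, ρ2, ρ1] [ρ1, ρ2, ρ1, ρ2, ρ1] ([] : List G) [ρ0, ρ0] r00.symm
    exact (((((t0).trans t1).trans t2).trans t3).trans t4).trans t5
  refine ⟨?_, ?_, ?_, ?_, ?_, ?_, ?_⟩
  · simpa [hu', hv', mul_assoc] using Ehuv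
  · simpa [hu', hv', mul_assoc] using Eh1u
  · simpa [hu', hv', mul_assoc] using Eh1v
  · simpa [hu', mul_assoc, mul_inv_rev, i0, i1, i2] using Eh0u
  · simpa [hu', hv', mul_assoc, mul_inv_rev, i0, i1, i2] using Eh0v
  · simpa [hu', mul_assoc] using Eh2u
  · simpa [hu', hv', mul_assoc, mul_inv_rev, i0, i1, i2] using Eh2v

private theorem pow_mod_eq' {G : Type*} [Group G] {z : G} {n : ℕ} (hz : z ^ n = 1) (m : ℕ) :
    z ^ (m % n) = z ^ m := by
  conv_rhs => rw [← Nat.div_add_mod m n]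
  rw [pow_add, pow_mul, hz, one_pow, one_mul]

private theorem zpow_one_of_dvd' {G : Type*} [Group G] {z : G} {n : ℕ} (hz : z ^ n = 1)
    {i : ℤ} (h : (n : ℤ) ∣ i) : z ^ i = 1 := by
  obtain ⟨k, rfl⟩ := h
  rw [zpow_mul, zpow_natCast, hz, one_zpow]

private theorem zpow_val_cast' {G : Type*} [Group G] {z : G} {n : ℕ} [NeZero n]
    (hz : z ^ n = 1) (i : ℤ) : z ^ ((i : ZMod n)).val = z ^ i := by
  have h1 : ((((i : ZMod n)).val : ℕ) : ℤ) = i % n := ZMod.val_intCast i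
  have hd : (n : ℤ) ∣ i - ((((i : ZMod n)).val : ℕ) : ℤ) := by
    rw [h1]
    exact ⟨i / n, by linarith [Int.mul_ediv_add_emod i n]⟩
  have h2 : z ^ i = z ^ ((((i : ZMod n)).val : ℕ) : ℤ) * z ^ (i - ((((i : ZMod n)).val : ℕ) : ℤ)) := by
    rw [← zpow_add]; ring_nf
  rw [h2, zpow_one_of_dvd' hz hd, mul_one, zpow_natCast]

private theorem mem_closure_pair' {G : Type*} [Group G] {x y : G} (h : x * y = y * x) (g : G) :
    g ∈ Subgroup.closure {x, y} ↔ ∃ i j : ℤ, g = x ^ i * y ^ j := by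
  have hc : Commute x y := h
  constructor
  · intro hg
    induction hg using Subgroup.closure_induction with
    | mem z hz =>
      rcases hz with rfl | rfl
      · exact ⟨1, 0, by simp⟩
      · exact ⟨0, 1, by simp⟩
    | one => exact ⟨0, 0, by simp⟩
    | mul g1 g2 _ _ ih1 ih2 =>
      obtain ⟨i1, j1, rfl⟩ := ih1
      obtain ⟨i2, j2, rfl⟩ := ih2
      refine ⟨i1 + i2, j1 + j2, ?_⟩
      rw [zpow_add, zpow_add, (hc.symm.zpow_zpow j1 i2).mul_mul_mul_comm]
    | inv g1 _ ih =>
      obtain ⟨i, j, rfl⟩ := ih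
      refine ⟨-i, -j, ?_⟩
      rw [mul_inv_rev, ← zpow_neg, ← zpow_neg, (hc.zpow_zpow (-i) (-j)).eq]
  · rintro ⟨i, j, rfl⟩
    exact mul_mem (zpow_mem (Subgroup.subset_closure (by simp)) i)
      (zpow_mem (Subgroup.subset_closure (by simp)) j)

private theorem cancel_pair' {G : Type*} [Group G] {x y : G} (h : x * y = y * x)
    {α β γ δ : ℤ} (e : x ^ α * y ^ β = x ^ γ * y ^ δ) :
    x ^ (α - γ) * y ^ (β - δ) = 1 := by
  have hc : Commute x y := h
  have h2 : (x ^ α * y ^ β) * (x ^ γ * y ^ δ)⁻¹ = 1 := by rw [e, mul_inv_cancel]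
  calc x ^ (α - γ) * y ^ (β - δ)
      = x ^ α * x ^ (-γ) * (y ^ β * y ^ (-δ)) := by
        rw [← zpow_add, ← zpow_add, sub_eq_add_neg, sub_eq_add_neg]
    _ = x ^ α * y ^ β * (x ^ (-γ) * y ^ (-δ)) := (hc.zpow_zpow (-γ) β).mul_mul_mul_comm _ _
    _ = (x ^ α * y ^ β) * (x ^ γ * y ^ δ)⁻¹ := by
        rw [mul_inv_rev, ← zpow_neg, ← zpow_neg, (hc.zpow_zpow (-γ) (-δ)).eq]
    _ = 1 := h2

theorem stmt12 (s a b : ℕ) (hs : 2 ≤ s) (ha : 0 < a) (hb : 0 < b)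
    (hlcm : s = Nat.lcm a b)
    (G : Type*) [Group G] [Finite G] (ρ0 ρ1 ρ2 : G)
    (hgen : Subgroup.closure {ρ0, ρ1, ρ2} = ⊤)
    (hr0 : ρ0 ^ 2 = 1) (hr1 : ρ1 ^ 2 = 1) (hr2 : ρ2 ^ 2 = 1)
    (h01 : (ρ0 * ρ1) ^ 3 = 1) (h12 : (ρ1 * ρ2) ^ 6 = 1) (h02 : (ρ0 * ρ2) ^ 2 = 1)
    (hmap : (ρ0 * ρ1 * ρ2) ^ (2 * s) = 1)
    (hG : Nat.card G = 12 * s ^ 2)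
    (u v : G) (hu : u = ρ0 * (ρ1 * ρ2) ^ 2 * ρ1) (hv : v = (ρ0 * ρ1 * ρ2) ^ 2)
    : (Subgroup.closure {u ^ a, v ^ b}).normalCore = ⊥ ∧
      (Subgroup.closure {u ^ a, v ^ b}).index = 12 * a * b := by
  have hr0' : ρ0 * ρ0 = 1 := by rw [← pow_two]; exact hr0
  have hr1' : ρ1 * ρ1 = 1 := by rw [← pow_two]; exact hr1
  have hr2' : ρ2 * ρ2 = 1 := by rw [← pow_two]; exact hr2
  have i0 : ρ0⁻¹ = ρ0 := by rw [inv_eq_iff_mul_eq_one]; exact hr0'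
  have i1 : ρ1⁻¹ = ρ1 := by rw [inv_eq_iff_mul_eq_one]; exact hr1'
  have i2 : ρ2⁻¹ = ρ2 := by rw [inv_eq_iff_mul_eq_one]; exact hr2'
  obtain ⟨huv, h1u, h1v, h0u, h0v, h2u, h2v⟩ := coxIdents hr0 hr1 hr2 h01 h12 h02 hu hv
  have hcuv : Commute u v := huv
  have hs0 : 0 < s := by omega
  haveI hsne : NeZero s := ⟨by omega⟩
  have has : a ∣ s := hlcm ▸ Nat.dvd_lcm_left a b
  have hbs : b ∣ s := hlcm ▸ Nat.dvd_lcm_right a b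
  have hsa : a * (s / a) = s := Nat.mul_div_cancel' has
  have hsb : b * (s / b) = s := Nat.mul_div_cancel' hbs
  have hsa0 : 0 < s / a := Nat.div_pos (Nat.le_of_dvd hs0 has) ha
  have hsb0 : 0 < s / b := Nat.div_pos (Nat.le_of_dvd hs0 hbs) hb
  haveI : NeZero (s / a) := ⟨hsa0.ne'⟩
  haveI : NeZero (s / b) := ⟨hsb0.ne'⟩
  have hvs : v ^ s = 1 := by rw [hv, ← pow_mul]; exact hmap
  have hus : u ^ s = 1 := by
    have e : (ρ1 * v * ρ1⁻¹) ^ s = ρ1 * v ^ s * ρ1⁻¹ := conj_pow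
    rw [i1, h1v, hvs] at e
    rw [e, mul_one, hr1']
  set T := Subgroup.closure ({u, v} : Set G) with hTdef
  have humem : u ∈ T := Subgroup.subset_closure (by simp)
  have hvmem : v ∈ T := Subgroup.subset_closure (by simp)
  -- T is normal
  have hstep : ∀ ρ : G, ρ * ρ = 1 → ρ * u * ρ ∈ T → ρ * v * ρ ∈ T →
      ∀ h ∈ T, ρ * h * ρ ∈ T := by
    intro ρ hρ hut hvt h hh
    have hinv : ρ⁻¹ = ρ := by rw [inv_eq_iff_mul_eq_one]; exact hρ
    obtain ⟨i, j, rfl⟩ := (mem_closure_pair' huv h).1 hh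
    have e1 : (ρ * u * ρ⁻¹) ^ i = ρ * u ^ i * ρ⁻¹ := conj_zpow
    have e2 : (ρ * v * ρ⁻¹) ^ j = ρ * v ^ j * ρ⁻¹ := conj_zpow
    rw [hinv] at e1 e2
    have e : ρ * (u ^ i * v ^ j) * ρ = (ρ * u ^ i * ρ) * (ρ * v ^ j * ρ) := by
      rw [show (ρ * u ^ i * ρ) * (ρ * v ^ j * ρ) = ρ * u ^ i * (ρ * ρ) * v ^ j * ρ by group,
        hρ, mul_one]
      group
    rw [e, ← e1, ← e2]
    exact mul_mem (zpow_mem hut i) (zpow_mem hvt j)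
  have hnorm : ∀ ρ : G, ρ * ρ = 1 → ρ * u * ρ ∈ T → ρ * v * ρ ∈ T → ρ ∈ Subgroup.normalizer (T : Set G) := by
    intro ρ hρ hut hvt
    have hinv : ρ⁻¹ = ρ := by rw [inv_eq_iff_mul_eq_one]; exact hρ
    rw [Subgroup.mem_normalizer_iff]
    intro h
    constructor
    · intro hh; rw [hinv]; exact hstep ρ hρ hut hvt h hh
    · intro hh
      rw [hinv] at hh
      have h2 := hstep ρ hρ hut hvt _ hh
      have e : ρ * (ρ * h * ρ) * ρ = h := by
        rw [show ρ * (ρ * h * ρ) * ρ = (ρ * ρ) * h * (ρ * ρ) by group, hρ, one_mul, mul_one]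
      rwa [e] at h2
  haveI hTN : T.Normal := by
    rw [← Subgroup.normalizer_eq_top_iff, eq_top_iff, ← hgen, Subgroup.closure_le]
    rintro z hz
    simp only [Set.mem_insert_iff, Set.mem_singleton_iff] at hz
    rcases hz with rfl | rfl | rfl
    · exact hnorm z hr0' (by rw [h0u]; exact inv_mem humem)
        (by rw [h0v]; exact mul_mem hvmem (inv_mem humem))
    · exact hnorm z hr1' (by rw [h1u]; exact hvmem) (by rw [h1v]; exact humem)
    · exact hnorm z hr2' (by rw [h2u]; exact humem)
        (by rw [h2v]; exact mul_mem (inv_mem hvmem) humem)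
  -- card T ≤ s ^ 2
  let Ψ : ZMod s × ZMod s → T := fun p => ⟨u ^ p.1.val * v ^ p.2.val,
    mul_mem (pow_mem humem _) (pow_mem hvmem _)⟩
  have hΨsurj : Function.Surjective Ψ := by
    rintro ⟨g, hg⟩
    obtain ⟨i, j, rfl⟩ := (mem_closure_pair' huv g).1 hg
    refine ⟨((i : ZMod s), (j : ZMod s)), ?_⟩
    apply Subtype.ext
    show u ^ ((i : ZMod s)).val * v ^ ((j : ZMod s)).val = u ^ i * v ^ j
    rw [zpow_val_cast' hus i, zpow_val_cast' hvs j]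
  have hTcard_le : Nat.card T ≤ s ^ 2 := by
    have h := Nat.card_le_card_of_surjective Ψ hΨsurj
    rwa [Nat.card_prod, Nat.card_zmod, ← pow_two] at h
  -- index of T ≤ 12 via dihedral quotient
  let π : G →* G ⧸ T := QuotientGroup.mk' T
  let x : G ⧸ T := π ρ1
  let y : G ⧸ T := π ρ2
  have hx2 : x * x = 1 := by show π ρ1 * π ρ1 = 1; rw [← map_mul, hr1', map_one]
  have hy2 : y * y = 1 := by show π ρ2 * π ρ2 = 1; rw [← map_mul, hr2', map_one]
  have hxinv : x⁻¹ = x := by rw [inv_eq_iff_mul_eq_one]; exact hx2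
  have hyinv : y⁻¹ = y := by rw [inv_eq_iff_mul_eq_one]; exact hy2
  have h21 : (ρ2 * ρ1) ^ 6 = 1 := by
    have e : ρ2 * (ρ1 * ρ2) * ρ2⁻¹ = ρ2 * ρ1 := by
      rw [i2, show ρ2 * (ρ1 * ρ2) * ρ2 = ρ2 * ρ1 * (ρ2 * ρ2) by group, hr2', mul_one]
    calc (ρ2 * ρ1) ^ 6 = (ρ2 * (ρ1 * ρ2) * ρ2⁻¹) ^ 6 := by rw [e]
      _ = ρ2 * (ρ1 * ρ2) ^ 6 * ρ2⁻¹ := conj_pow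
      _ = 1 := by rw [h12, mul_one, i2, hr2']
  let w : G ⧸ T := y * x
  have hw6 : w ^ 6 = 1 := by
    show (π ρ2 * π ρ1) ^ 6 = 1
    rw [← map_mul, ← map_pow, h21, map_one]
  let W : ZMod 6 → G ⧸ T := fun c => w ^ c.val
  have hWadd : ∀ c d : ZMod 6, W (c + d) = W c * W d := by
    intro c d
    show w ^ (c + d).val = w ^ c.val * w ^ d.val
    rw [ZMod.val_add, pow_mod_eq' hw6, pow_add]
  have hW0 : W 0 = 1 := by show w ^ (0 : ZMod 6).val = 1; rw [ZMod.val_zero, pow_zero]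
  have hWneg : ∀ c, W (-c) = (W c)⁻¹ := by
    intro c
    refine eq_inv_of_mul_eq_one_left ?_
    rw [← hWadd, neg_add_cancel, hW0]
  have hxwx : x * w * x = w⁻¹ := by
    show x * (y * x) * x = (y * x)⁻¹
    rw [mul_inv_rev, hxinv, hyinv,
      show x * (y * x) * x = x * y * (x * x) by group, hx2, mul_one]
  have hxWx : ∀ c, x * W c * x = (W c)⁻¹ := by
    intro c
    show x * w ^ c.val * x = (w ^ c.val)⁻¹
    have e : (x * w * x⁻¹) ^ c.val = x * w ^ c.val * x⁻¹ := conj_pow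
    rw [hxinv] at e
    rw [← e, hxwx, inv_pow]
  have hWx : ∀ c, W c * x = x * W (-c) := by
    intro c
    rw [hWneg]
    have h2 := hxWx c
    calc W c * x = x * (x * W c * x) := by
          rw [show x * (x * W c * x) = (x * x) * W c * x by group, hx2, one_mul]
      _ = x * (W c)⁻¹ := by rw [h2]
  let Ffun : DihedralGroup 6 → G ⧸ T := fun d =>
    match d with
    | DihedralGroup.r i => W i
    | DihedralGroup.sr i => x * W i
  have hFmul : ∀ d e : DihedralGroup 6, Ffun (d * e) = Ffun d * Ffun e := by
    rintro (i | i) (j | j)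
    · show W (i + j) = W i * W j
      exact hWadd i j
    · show x * W (j - i) = W i * (x * W j)
      rw [sub_eq_neg_add, show W i * (x * W j) = (W i * x) * W j by rw [mul_assoc],
        hWx, mul_assoc, ← hWadd]
    · show x * W (i + j) = x * W i * W j
      rw [hWadd, mul_assoc]
    · show W (j - i) = x * W i * (x * W j)
      rw [show x * W i * (x * W j) = x * (W i * x) * W j by group, hWx,
        show x * (x * W (-i)) * W j = x * x * (W (-i) * W j) by group, hx2, one_mul,
        ← hWadd, sub_eq_neg_add]
  let F : DihedralGroup 6 →* G ⧸ T := MonoidHom.mk' Ffun hFmul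
  have hFx : F (DihedralGroup.sr 0) = x := by
    show x * W 0 = x
    rw [hW0, mul_one]
  have hW1 : W 1 = w := by
    show w ^ (1 : ZMod 6).val = w
    rw [show ((1 : ZMod 6)).val = 1 by decide, pow_one]
  have hFy : F (DihedralGroup.sr (-1)) = y := by
    show x * W (-1) = y
    rw [hWneg, hW1]
    show x * (y * x)⁻¹ = y
    rw [mul_inv_rev, hxinv, hyinv, show x * (x * y) = (x * x) * y by group, hx2, one_mul]
  have hπu : π u = 1 := (QuotientGroup.eq_one_iff u).2 humem
  have hπρ0 : π ρ0 = ((x * y) ^ 2 * x)⁻¹ := by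
    have hρ0 : ρ0 = u * ((ρ1 * ρ2) ^ 2 * ρ1)⁻¹ := by rw [hu]; group
    rw [hρ0, map_mul, hπu, one_mul, map_inv, map_mul, map_pow, map_mul]
  have hFsurj : Function.Surjective F := by
    rw [← MonoidHom.range_eq_top, eq_top_iff]
    have hQtop : Subgroup.closure ({π ρ0, π ρ1, π ρ2} : Set (G ⧸ T)) = ⊤ := by
      have h2 := Subgroup.map_top_of_surjective π (QuotientGroup.mk'_surjective T)
      rw [← hgen, MonoidHom.map_closure] at h2
      rw [← h2]
      congr 1
      simp [Set.image_insert_eq]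
    rw [← hQtop, Subgroup.closure_le]
    have hxr : x ∈ F.range := ⟨DihedralGroup.sr 0, hFx⟩
    have hyr : y ∈ F.range := ⟨DihedralGroup.sr (-1), hFy⟩
    rintro z hz
    simp only [Set.mem_insert_iff, Set.mem_singleton_iff] at hz
    rcases hz with rfl | rfl | rfl
    · rw [SetLike.mem_coe, hπρ0]
      exact inv_mem (mul_mem (pow_mem (mul_mem hxr hyr) 2) hxr)
    · exact hxr
    · exact hyr
  have hTidx_le : T.index ≤ 12 := by
    have h := Nat.card_le_card_of_surjective F hFsurj
    rw [Nat.card_eq_fintype_card (α := DihedralGroup 6), DihedralGroup.card] at h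
    rw [Subgroup.index_eq_card]
    exact h
  -- exact card of T
  have hTcard : Nat.card T = s ^ 2 := by
    have hc := Subgroup.card_mul_index T
    rw [hG] at hc
    have h2 : Nat.card T * T.index ≤ Nat.card T * 12 := Nat.mul_le_mul le_rfl hTidx_le
    rw [hc] at h2
    have h3 : s ^ 2 ≤ Nat.card T := by linarith
    exact le_antisymm hTcard_le h3
  have hΨbij : Function.Bijective Ψ := by
    rw [Nat.bijective_iff_surjective_and_card]
    exact ⟨hΨsurj, by rw [Nat.card_prod, Nat.card_zmod, hTcard, pow_two]⟩
  have key : ∀ i j : ℤ, u ^ i * v ^ j = 1 → (s : ℤ) ∣ i ∧ (s : ℤ) ∣ j := by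
    intro i j hij
    have e : Ψ ((i : ZMod s), (j : ZMod s)) = Ψ ((0 : ZMod s), (0 : ZMod s)) := by
      apply Subtype.ext
      show u ^ ((i : ZMod s)).val * v ^ ((j : ZMod s)).val
        = u ^ ((0 : ZMod s)).val * v ^ ((0 : ZMod s)).val
      rw [zpow_val_cast' hus i, zpow_val_cast' hvs j, hij]
      simp [ZMod.val_zero]
    have e2 := hΨbij.1 e
    rw [Prod.ext_iff] at e2
    exact ⟨(ZMod.intCast_zmod_eq_zero_iff_dvd i s).1 e2.1,
      (ZMod.intCast_zmod_eq_zero_iff_dvd j s).1 e2.2⟩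
  -- the subgroup H
  have hcab : Commute (u ^ a) (v ^ b) := hcuv.pow_pow a b
  set H := Subgroup.closure ({u ^ a, v ^ b} : Set G) with hHdef
  have key2 : ∀ i j : ℤ, (u ^ a) ^ i * (v ^ b) ^ j = 1 →
      ((s / a : ℕ) : ℤ) ∣ i ∧ ((s / b : ℕ) : ℤ) ∣ j := by
    intro i j hij
    rw [← zpow_natCast u a, ← zpow_mul, ← zpow_natCast v b, ← zpow_mul] at hij
    obtain ⟨d1, d2⟩ := key _ _ hij
    have hcasta : ((a : ℤ)) * ((s / a : ℕ) : ℤ) = (s : ℤ) := by exact_mod_cast hsa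
    have hcastb : ((b : ℤ)) * ((s / b : ℕ) : ℤ) = (s : ℤ) := by exact_mod_cast hsb
    rw [← hcasta] at d1
    rw [← hcastb] at d2
    exact ⟨(mul_dvd_mul_iff_left (by exact_mod_cast ha.ne' : (a : ℤ) ≠ 0)).1 d1,
      (mul_dvd_mul_iff_left (by exact_mod_cast hb.ne' : (b : ℤ) ≠ 0)).1 d2⟩
  have huas : (u ^ a) ^ (s / a) = 1 := by rw [← pow_mul, hsa, hus]
  have hvbs : (v ^ b) ^ (s / b) = 1 := by rw [← pow_mul, hsb, hvs]
  have huaH : u ^ a ∈ H := Subgroup.subset_closure (by simp)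
  have hvbH : v ^ b ∈ H := Subgroup.subset_closure (by simp)
  let Φ : ZMod (s / a) × ZMod (s / b) → H := fun p =>
    ⟨(u ^ a) ^ p.1.val * (v ^ b) ^ p.2.val, mul_mem (pow_mem huaH _) (pow_mem hvbH _)⟩
  have hΦsurj : Function.Surjective Φ := by
    rintro ⟨g, hg⟩
    obtain ⟨i, j, rfl⟩ := (mem_closure_pair' hcab.eq g).1 hg
    refine ⟨((i : ZMod (s / a)), (j : ZMod (s / b))), ?_⟩
    apply Subtype.ext
    show (u ^ a) ^ ((i : ZMod (s / a))).val * (v ^ b) ^ ((j : ZMod (s / b))).val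
      = (u ^ a) ^ i * (v ^ b) ^ j
    rw [zpow_val_cast' huas i, zpow_val_cast' hvbs j]
  have hΦinj : Function.Injective Φ := by
    rintro ⟨p1, p2⟩ ⟨q1, q2⟩ hpq
    have e : (u ^ a) ^ (p1.val : ℤ) * (v ^ b) ^ (p2.val : ℤ)
        = (u ^ a) ^ (q1.val : ℤ) * (v ^ b) ^ (q2.val : ℤ) := by
      rw [zpow_natCast, zpow_natCast, zpow_natCast, zpow_natCast]
      exact congrArg Subtype.val hpq
    have e2 := cancel_pair' hcab.eq e
    obtain ⟨d1, d2⟩ := key2 _ _ e2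
    have f1 : p1 = q1 := by
      have h3 : (((p1.val : ℤ) - (q1.val : ℤ) : ℤ) : ZMod (s / a)) = 0 :=
        (ZMod.intCast_zmod_eq_zero_iff_dvd _ _).2 d1
      push_cast at h3
      rw [ZMod.natCast_rightInverse p1, ZMod.natCast_rightInverse q1] at h3
      exact sub_eq_zero.1 h3
    have f2 : p2 = q2 := by
      have h3 : (((p2.val : ℤ) - (q2.val : ℤ) : ℤ) : ZMod (s / b)) = 0 :=
        (ZMod.intCast_zmod_eq_zero_iff_dvd _ _).2 d2
      push_cast at h3
      rw [ZMod.natCast_rightInverse p2, ZMod.natCast_rightInverse q2] at h3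
      exact sub_eq_zero.1 h3
    rw [Prod.ext_iff]
    exact ⟨f1, f2⟩
  have hHcard : Nat.card H = (s / a) * (s / b) := by
    have h2 := Nat.card_eq_of_bijective Φ ⟨hΦinj, hΦsurj⟩
    rw [← h2, Nat.card_prod, Nat.card_zmod, Nat.card_zmod]
  constructor
  · -- core-free
    rw [Subgroup.eq_bot_iff_forall]
    intro g hg
    have hgH : g ∈ H := Subgroup.normalCore_le H hg
    obtain ⟨i, j, rfl⟩ := (mem_closure_pair' hcab.eq _).1 hgH
    have hconj : ρ1 * ((u ^ a) ^ i * (v ^ b) ^ j) * ρ1⁻¹ ∈ H.normalCore :=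
      (Subgroup.normalCore_normal H).conj_mem _ hg ρ1
    have hconjH : ρ1 * ((u ^ a) ^ i * (v ^ b) ^ j) * ρ1⁻¹ ∈ H :=
      Subgroup.normalCore_le H hconj
    have c1 : ρ1 * u ^ ((a : ℤ) * i) * ρ1⁻¹ = v ^ ((a : ℤ) * i) := by
      have e := (conj_zpow (i := (a : ℤ) * i) (a := ρ1) (b := u))
      rw [i1, h1u] at e
      rw [i1, ← e]
    have c2 : ρ1 * v ^ ((b : ℤ) * j) * ρ1⁻¹ = u ^ ((b : ℤ) * j) := by
      have e := (conj_zpow (i := (b : ℤ) * j) (a := ρ1) (b := v))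
      rw [i1, h1v] at e
      rw [i1, ← e]
    have e : ρ1 * ((u ^ a) ^ i * (v ^ b) ^ j) * ρ1⁻¹
        = u ^ ((b : ℤ) * j) * v ^ ((a : ℤ) * i) := by
      rw [← zpow_natCast u a, ← zpow_mul, ← zpow_natCast v b, ← zpow_mul]
      rw [show ρ1 * (u ^ ((a : ℤ) * i) * v ^ ((b : ℤ) * j)) * ρ1⁻¹
          = (ρ1 * u ^ ((a : ℤ) * i) * ρ1⁻¹) * (ρ1 * v ^ ((b : ℤ) * j) * ρ1⁻¹) by group]
      rw [c1, c2]
      exact (hcuv.symm.zpow_zpow _ _).eq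
    rw [e] at hconjH
    obtain ⟨i', j', he⟩ := (mem_closure_pair' hcab.eq _).1 hconjH
    rw [← zpow_natCast u a, ← zpow_mul, ← zpow_natCast v b, ← zpow_mul] at he
    have hz := cancel_pair' huv he
    obtain ⟨d1, d2⟩ := key _ _ hz
    have hasz : (a : ℤ) ∣ (s : ℤ) := Int.natCast_dvd_natCast.2 has
    have hbsz : (b : ℤ) ∣ (s : ℤ) := Int.natCast_dvd_natCast.2 hbs
    have h1 : (a : ℤ) ∣ (b : ℤ) * j := by
      have h4 : (a : ℤ) ∣ (b : ℤ) * j - (a : ℤ) * i' := hasz.trans d1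
      have h5 : (a : ℤ) ∣ (a : ℤ) * i' := dvd_mul_right _ _
      have := dvd_add h4 h5
      rwa [sub_add_cancel] at this
    have h2 : (b : ℤ) ∣ (a : ℤ) * i := by
      have h4 : (b : ℤ) ∣ (a : ℤ) * i - (b : ℤ) * j' := hbsz.trans d2
      have h5 : (b : ℤ) ∣ (b : ℤ) * j' := dvd_mul_right _ _
      have := dvd_add h4 h5
      rwa [sub_add_cancel] at this
    have hdvd_bj : (s : ℤ) ∣ (b : ℤ) * j := by
      have h6 := Int.coe_lcm_dvd h1 (dvd_mul_right (b : ℤ) j)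
      rwa [show Int.lcm (a : ℤ) (b : ℤ) = Nat.lcm a b by simp [Int.lcm], ← hlcm] at h6
    have hdvd_ai : (s : ℤ) ∣ (a : ℤ) * i := by
      have h6 := Int.coe_lcm_dvd (dvd_mul_right (a : ℤ) i) h2
      rwa [show Int.lcm (a : ℤ) (b : ℤ) = Nat.lcm a b by simp [Int.lcm], ← hlcm] at h6
    rw [← zpow_natCast u a, ← zpow_mul, ← zpow_natCast v b, ← zpow_mul]
    rw [zpow_one_of_dvd' hus hdvd_ai, zpow_one_of_dvd' hvs hdvd_bj, one_mul]
  · -- index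
    have hc := Subgroup.card_mul_index H
    rw [hHcard, hG] at hc
    have e : s / a * (s / b) * (12 * a * b) = 12 * s ^ 2 := by
      rw [pow_two]
      calc s / a * (s / b) * (12 * a * b) = 12 * ((a * (s / a)) * (b * (s / b))) := by ring
        _ = 12 * (s * s) := by rw [hsa, hsb]
    have hpos : 0 < s / a * (s / b) := Nat.mul_pos hsa0 hsb0
    exact Nat.eq_of_mul_eq_mul_left hpos (by rw [hc, ← e])
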